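/- Let H be an inner product space, x_1,…,x_n ∈ H, and p, q > 1 with 1/p + 1/q = 1. Then (∑_{i=1}^n ‖x_i‖)² ≤ ‖∑_{i=1}^n x_i‖² + ∑_{1 ≤ i < j ≤ n} (j − i)^{2/q} · (∑_{k=1}^{n−1} ‖Δx_k‖^p)^{2/p}, where Δx_k := x_{k+1} − x_k. -/

import Mathlib

open Finset in
private lemma telescope_aux' {H : Type*} [AddCommGroup H] (f : ℕ → H) {i j : ℕ} (h : i ≤ j) :
    ∑ k ∈ Finset.Ico i j, (f (k + 1) - f k) = f j - f i := by
  rw [Finset.sum_Ico_eq_sum_range]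
  have h2 := Finset.sum_range_sub (fun k => f (i + k)) (j - i)
  rw [Nat.add_sub_cancel' h] at h2
  simp only [Nat.add_zero] at h2
  rw [← h2]
  exact Finset.sum_congr rfl fun k _ => by rw [Nat.add_assoc]

open Finset in
theorem stmt_12 {𝕜 H : Type*} [RCLike 𝕜] [NormedAddCommGroup H] [InnerProductSpace 𝕜 H]
    (n : ℕ) (x : ℕ → H) (p q : ℝ) (hp : 1 < p) (hq : 1 < q)
    (hpq : 1 / p + 1 / q = 1) :
    (∑ i ∈ Finset.Icc 1 n, ‖x i‖) ^ 2 ≤ ‖∑ i ∈ Finset.Icc 1 n, x i‖ ^ 2 +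
      ∑ i ∈ Finset.Icc 1 n, ∑ j ∈ Finset.Icc 1 n,
        (if i < j then
          ((j : ℝ) - (i : ℝ)) ^ ((2 : ℝ) / q) *
            (∑ k ∈ Finset.Icc 1 (n - 1), ‖x (k + 1) - x k‖ ^ p) ^ ((2 : ℝ) / p)
        else 0) := by
  have hp0 : (0:ℝ) < p := lt_trans one_pos hp
  have hq0 : (0:ℝ) < q := lt_trans one_pos hq
  have hpq' : Real.HolderConjugate p q := Real.holderConjugate_iff.mpr ⟨hp, by rw [← one_div, ← one_div]; exact hpq⟩
  set S := ∑ k ∈ Finset.Icc 1 (n - 1), ‖x (k + 1) - x k‖ ^ p with hS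
  have hS0 : 0 ≤ S := Finset.sum_nonneg fun k _ => Real.rpow_nonneg (norm_nonneg _) p
  set t : ℕ → ℕ → ℝ := fun i j => ‖x i‖ * ‖x j‖ - RCLike.re (inner 𝕜 (x i) (x j)) with ht
  -- pointwise key bound
  have key : ∀ i j : ℕ, 1 ≤ i → i < j → j ≤ n →
      2 * t i j ≤ ((j : ℝ) - (i : ℝ)) ^ ((2 : ℝ) / q) * S ^ ((2 : ℝ) / p) := by
    intro i j hi hij hj
    have h1 : 2 * t i j ≤ ‖x j - x i‖ ^ 2 := by
      have hns := norm_sub_sq (𝕜 := 𝕜) (x j) (x i)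
      have hre : RCLike.re (inner 𝕜 (x j) (x i)) = RCLike.re (inner 𝕜 (x i) (x j)) := by
        exact inner_re_symm (𝕜 := 𝕜) (x j) (x i)
      have h2 : 2 * (‖x i‖ * ‖x j‖) ≤ ‖x i‖ ^ 2 + ‖x j‖ ^ 2 := by
        nlinarith [sq_nonneg (‖x i‖ - ‖x j‖)]
      simp only [ht]
      nlinarith
    -- telescoping and triangle inequality
    have htri : ‖x j - x i‖ ≤ ∑ k ∈ Finset.Ico i j, ‖x (k + 1) - x k‖ := by
      rw [← telescope_aux' x hij.le]
      exact norm_sum_le _ _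
    -- Hölder
    have hhold : ∑ k ∈ Finset.Ico i j, ‖x (k + 1) - x k‖ ≤
        (∑ k ∈ Finset.Ico i j, ‖x (k + 1) - x k‖ ^ p) ^ (1 / p) *
          ((j : ℝ) - (i : ℝ)) ^ (1 / q) := by
      have := Real.inner_le_Lp_mul_Lq_of_nonneg (Finset.Ico i j)
        (f := fun k => ‖x (k + 1) - x k‖) (g := fun _ => (1:ℝ)) hpq'
        (fun k _ => norm_nonneg _) (fun k _ => zero_le_one)
      simp only [mul_one, Real.one_rpow, Finset.sum_const, nsmul_eq_mul] at this
      rw [Nat.card_Ico] at this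
      have hcast : ((j - i : ℕ) : ℝ) = (j : ℝ) - (i : ℝ) := by
        push_cast [Nat.cast_sub hij.le]; ring
      rw [hcast] at this
      exact this
    -- subset bound
    have hsub : ∑ k ∈ Finset.Ico i j, ‖x (k + 1) - x k‖ ^ p ≤ S := by
      apply Finset.sum_le_sum_of_subset_of_nonneg
      · intro k hk
        simp only [Finset.mem_Ico] at hk
        simp only [Finset.mem_Icc]
        omega
      · intro k _ _; exact Real.rpow_nonneg (norm_nonneg _) p
    have hji : (0:ℝ) ≤ (j : ℝ) - (i : ℝ) := by
      have : (i:ℝ) ≤ (j:ℝ) := Nat.cast_le.mpr hij.le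
      linarith
    have hB0 : 0 ≤ ∑ k ∈ Finset.Ico i j, ‖x (k + 1) - x k‖ ^ p :=
      Finset.sum_nonneg fun k _ => Real.rpow_nonneg (norm_nonneg _) p
    have hchain : ‖x j - x i‖ ≤ S ^ (1 / p) * ((j : ℝ) - (i : ℝ)) ^ (1 / q) := by
      refine le_trans htri (le_trans hhold ?_)
      apply mul_le_mul_of_nonneg_right _ (Real.rpow_nonneg hji _)
      exact Real.rpow_le_rpow hB0 hsub (by positivity)
    have hsq : ‖x j - x i‖ ^ 2 ≤ (S ^ (1 / p) * ((j : ℝ) - (i : ℝ)) ^ (1 / q)) ^ 2 := by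
      apply pow_le_pow_left₀ (norm_nonneg _) hchain
    refine le_trans h1 (le_trans hsq (le_of_eq ?_))
    rw [mul_pow]
    rw [← Real.rpow_natCast (S ^ (1/p)) 2, ← Real.rpow_natCast (((j:ℝ) - (i:ℝ)) ^ (1/q)) 2]
    rw [← Real.rpow_mul hS0, ← Real.rpow_mul hji]
    push_cast
    rw [show (1/p) * (2:ℝ) = 2/p by ring, show (1/q) * (2:ℝ) = 2/q by ring]
    ring
  -- expansion
  have expand : (∑ i ∈ Icc 1 n, ‖x i‖) ^ 2 =
      ‖∑ i ∈ Icc 1 n, x i‖ ^ 2 + ∑ i ∈ Icc 1 n, ∑ j ∈ Icc 1 n, t i j := by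
    have e1 : (∑ i ∈ Icc 1 n, ‖x i‖) ^ 2 = ∑ i ∈ Icc 1 n, ∑ j ∈ Icc 1 n, (‖x i‖ * ‖x j‖) := by
      rw [sq, Finset.sum_mul_sum]
    have e2 : ‖∑ i ∈ Icc 1 n, x i‖ ^ 2 =
        ∑ i ∈ Icc 1 n, ∑ j ∈ Icc 1 n, RCLike.re (inner 𝕜 (x i) (x j)) := by
      rw [← inner_self_eq_norm_sq (𝕜 := 𝕜), sum_inner, map_sum]
      apply Finset.sum_congr rfl
      intro i _
      rw [inner_sum, map_sum]
    rw [e1, e2, ← Finset.sum_add_distrib]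
    apply Finset.sum_congr rfl
    intro i _
    rw [← Finset.sum_add_distrib]
    apply Finset.sum_congr rfl
    intro j _
    simp only [ht]
    ring
  -- symmetry
  have tsymm : ∀ i j, t i j = t j i := by
    intro i j
    simp only [ht]
    rw [inner_re_symm (𝕜 := 𝕜) (x i) (x j), mul_comm]
  have tdiag : ∀ i, t i i = 0 := by
    intro i
    simp only [ht]
    rw [inner_self_eq_norm_sq (𝕜 := 𝕜), sq]
    ring
  have hsym : ∑ i ∈ Icc 1 n, ∑ j ∈ Icc 1 n, t i j
      = ∑ i ∈ Icc 1 n, ∑ j ∈ Icc 1 n, (if i < j then 2 * t i j else 0) := by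
    have step1 : ∑ i ∈ Icc 1 n, ∑ j ∈ Icc 1 n, t i j
        = ∑ i ∈ Icc 1 n, ∑ j ∈ Icc 1 n,
          ((if i < j then t i j else 0) + (if j < i then t i j else 0)) := by
      apply Finset.sum_congr rfl; intro i _
      apply Finset.sum_congr rfl; intro j _
      rcases lt_trichotomy i j with h | h | h
      · simp [h, not_lt_of_gt h]
      · simp [h, tdiag j]
      · simp [h, not_lt_of_gt h]
    have step2 : ∑ i ∈ Icc 1 n, ∑ j ∈ Icc 1 n, (if j < i then t i j else 0)
        = ∑ i ∈ Icc 1 n, ∑ j ∈ Icc 1 n, (if i < j then t i j else 0) := by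
      rw [Finset.sum_comm]
      apply Finset.sum_congr rfl; intro i _
      apply Finset.sum_congr rfl; intro j _
      rcases lt_trichotomy i j with h | h | h
      · simp [h, tsymm i j]
      · simp [h]
      · simp [h, not_lt_of_gt h]
    rw [step1]
    simp only [Finset.sum_add_distrib]
    rw [step2, ← Finset.sum_add_distrib]
    apply Finset.sum_congr rfl; intro i _
    rw [← Finset.sum_add_distrib]
    apply Finset.sum_congr rfl; intro j _
    split_ifs with h
    · ring
    · ring
  rw [expand, hsym]
  refine add_le_add le_rfl ?_
  apply Finset.sum_le_sum
  intro i hi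
  apply Finset.sum_le_sum
  intro j hj
  split_ifs with h
  · exact key i j (Finset.mem_Icc.mp hi).1 h (Finset.mem_Icc.mp hj).2
  · exact le_refl 0
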